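/- Let X be a binary random variable and Y a random variable on a finite alphabet. Then the square of the Bhattacharyya parameter is at most the conditional entropy: Z(X|Y)^2 \leq H(X|Y), where H is measured in bits. -/

import Mathlib

open scoped BigOperators

private lemma two_pow_half_le {a b : ℝ} (ha : 0 ≤ a) (hb : 0 ≤ b) (hab : a + b = 1) (n : ℕ) :
    2 * (1 / 2 : ℝ) ^ n ≤ a ^ n + b ^ n := by
  have h := (convexOn_pow (𝕜 := ℝ) n).2 (Set.mem_Ici.2 ha) (Set.mem_Ici.2 hb)
      (by norm_num : (0:ℝ) ≤ 1/2) (by norm_num : (0:ℝ) ≤ 1/2) (by norm_num)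
  simp only [smul_eq_mul] at h
  have h2 : (1/2:ℝ) * a + (1/2) * b = 1/2 := by linarith
  rw [h2] at h
  linarith

private lemma core_nats {a b : ℝ} (ha : 0 < a) (hb : 0 < b) (hab : a + b = 1) :
    4 * (a * b) * Real.log 2 ≤ -(a * Real.log a + b * Real.log b) := by
  have ha1 : a < 1 := by linarith
  have hb1 : b < 1 := by linarith
  have hsA : HasSum (fun n : ℕ => b ^ (n + 1) / (n + 1)) (-Real.log a) := by
    have h := Real.hasSum_pow_div_log_of_abs_lt_one
        (x := b) (by rw [abs_of_nonneg hb.le]; exact hb1)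
    have e : (1 : ℝ) - b = a := by linarith
    rwa [e] at h
  have hsB : HasSum (fun n : ℕ => a ^ (n + 1) / (n + 1)) (-Real.log b) := by
    have h := Real.hasSum_pow_div_log_of_abs_lt_one
        (x := a) (by rw [abs_of_nonneg ha.le]; exact ha1)
    have e : (1 : ℝ) - a = b := by linarith
    rwa [e] at h
  have hsH : HasSum (fun n : ℕ => a * (b ^ (n + 1) / (n + 1)) + b * (a ^ (n + 1) / (n + 1)))
      (-(a * Real.log a + b * Real.log b)) := by
    have := (hsA.mul_left a).add (hsB.mul_left b)
    convert this using 1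
    · rfl
    ring
  have hsL : HasSum (fun n : ℕ => 4 * (a * b) * ((1/2 : ℝ) ^ (n + 1) / (n + 1)))
      (4 * (a * b) * Real.log 2) := by
    have h := Real.hasSum_pow_div_log_of_abs_lt_one (x := (1/2 : ℝ))
        (by rw [abs_of_nonneg (by norm_num : (0:ℝ) ≤ 1/2)]; norm_num)
    have e : -Real.log (1 - 1/2 : ℝ) = Real.log 2 := by
      rw [show (1 : ℝ) - 1/2 = 2⁻¹ by norm_num, Real.log_inv, neg_neg]
    rw [e] at h
    exact h.mul_left _
  refine hasSum_le (fun n => ?_) hsL hsH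
  have hn : (0 : ℝ) < (n : ℝ) + 1 := by positivity
  have key : 4 * (a * b) * (1/2 : ℝ) ^ (n + 1) ≤ a * b ^ (n + 1) + b * a ^ (n + 1) := by
    have h2 := two_pow_half_le ha.le hb.le hab n
    have hab' : 0 ≤ a * b := mul_nonneg ha.le hb.le
    have h3 := mul_le_mul_of_nonneg_left h2 hab'
    calc 4 * (a * b) * (1/2 : ℝ) ^ (n + 1) = a * b * (2 * (1/2:ℝ) ^ n) := by ring
      _ ≤ a * b * (a ^ n + b ^ n) := h3
      _ = a * b ^ (n + 1) + b * a ^ (n + 1) := by ring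
  calc 4 * (a * b) * ((1/2 : ℝ) ^ (n + 1) / (n + 1))
      = (4 * (a * b) * (1/2 : ℝ) ^ (n + 1)) / (n + 1) := by ring
    _ ≤ (a * b ^ (n + 1) + b * a ^ (n + 1)) / (n + 1) := by gcongr
    _ = a * (b ^ (n + 1) / (n + 1)) + b * (a ^ (n + 1) / (n + 1)) := by ring

private lemma per_y_bound {a b : ℝ} (ha : 0 ≤ a) (hb : 0 ≤ b) :
    4 * (a * b) / (a + b)
      ≤ -(a * Real.logb 2 (a / (a + b)) + b * Real.logb 2 (b / (a + b))) := by
  rcases eq_or_lt_of_le ha with h0 | ha'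
  · rcases eq_or_lt_of_le hb with h0' | hb'
    · simp [← h0, ← h0']
    · simp [← h0, div_self hb'.ne']
  rcases eq_or_lt_of_le hb with h0' | hb'
  · simp [← h0', div_self ha'.ne']
  have hs : 0 < a + b := by linarith
  set s := a + b with hsdef
  have hα : 0 < a / s := div_pos ha' hs
  have hβ : 0 < b / s := div_pos hb' hs
  have hαβ : a / s + b / s = 1 := by field_simp; exact hsdef.symm
  have key := core_nats hα hβ hαβ
  have hl2 : 0 < Real.log 2 := Real.log_pos (by norm_num)
  have key' := mul_le_mul_of_nonneg_left key hs.le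
  have e1 : s * (4 * (a / s * (b / s)) * Real.log 2) = 4 * (a * b) / s * Real.log 2 := by
    field_simp
  have e2 : s * -(a / s * Real.log (a / s) + b / s * Real.log (b / s))
      = -(a * Real.log (a / s) + b * Real.log (b / s)) := by
    field_simp
  rw [e1, e2] at key'
  rw [Real.logb, Real.logb]
  rw [show -(a * (Real.log (a / s) / Real.log 2) + b * (Real.log (b / s) / Real.log 2))
      = (-(a * Real.log (a / s) + b * Real.log (b / s))) / Real.log 2 by ring]
  rw [le_div_iff₀ hl2]
  exact key'

theorem bhattacharyya_sq_le_condEntropy {Y : Type*} [Fintype Y]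
    (p : Fin 2 → Y → ℝ) (hp : ∀ x y, 0 ≤ p x y)
    (hsum : ∑ x, ∑ y, p x y = 1) :
    (2 * ∑ y, Real.sqrt (p 0 y * p 1 y)) ^ 2
      ≤ -∑ x, ∑ y, p x y * Real.logb 2 (p x y / ∑ x', p x' y) := by
  classical
  set q : Y → ℝ := fun y => p 0 y + p 1 y with hq
  have hq0 : ∀ y, 0 ≤ q y := fun y => add_nonneg (hp 0 y) (hp 1 y)
  have hqsum : ∑ y, q y = 1 := by
    rw [Fin.sum_univ_two] at hsum
    rw [hq, Finset.sum_add_distrib]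
    exact hsum
  have cs : (2 * ∑ y, Real.sqrt (p 0 y * p 1 y)) ^ 2
      ≤ ∑ y, 4 * (p 0 y * p 1 y) / q y := by
    have h := Finset.sum_mul_sq_le_sq_mul_sq Finset.univ
        (fun y => Real.sqrt (q y))
        (fun y => 2 * Real.sqrt (p 0 y * p 1 y) / Real.sqrt (q y))
    have e1 : ∀ y : Y, Real.sqrt (q y) * (2 * Real.sqrt (p 0 y * p 1 y) / Real.sqrt (q y))
        = 2 * Real.sqrt (p 0 y * p 1 y) := by
      intro y
      rcases eq_or_lt_of_le (hq0 y) with h0 | hpos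
      · have h0' : p 0 y + p 1 y = 0 := h0.symm
        have h1 : p 0 y = 0 := by have := hp 1 y; have := hp 0 y; linarith
        simp [h1]
      · rw [mul_div_assoc', mul_comm (Real.sqrt (q y)), mul_div_assoc,
          div_self (Real.sqrt_pos.2 hpos).ne', mul_one]
    have e2 : ∀ y : Y, (Real.sqrt (q y)) ^ 2 = q y := fun y => Real.sq_sqrt (hq0 y)
    have e3 : ∀ y : Y, (2 * Real.sqrt (p 0 y * p 1 y) / Real.sqrt (q y)) ^ 2
        = 4 * (p 0 y * p 1 y) / q y := by
      intro y
      rw [div_pow, mul_pow, Real.sq_sqrt (mul_nonneg (hp 0 y) (hp 1 y)), Real.sq_sqrt (hq0 y)]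
      norm_num
    calc (2 * ∑ y, Real.sqrt (p 0 y * p 1 y)) ^ 2
        = (∑ y, 2 * Real.sqrt (p 0 y * p 1 y)) ^ 2 := by rw [Finset.mul_sum]
      _ = (∑ y, Real.sqrt (q y) * (2 * Real.sqrt (p 0 y * p 1 y) / Real.sqrt (q y))) ^ 2 := by
          rw [Finset.sum_congr rfl (fun y _ => (e1 y).symm)]
      _ ≤ (∑ y, (Real.sqrt (q y)) ^ 2)
            * ∑ y, (2 * Real.sqrt (p 0 y * p 1 y) / Real.sqrt (q y)) ^ 2 := h
      _ = ∑ y, 4 * (p 0 y * p 1 y) / q y := by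
          rw [Finset.sum_congr rfl (fun y _ => e2 y), hqsum, one_mul,
            Finset.sum_congr rfl (fun y _ => e3 y)]
  refine cs.trans ?_
  rw [Fin.sum_univ_two]
  have rearr : -((∑ y, p 0 y * Real.logb 2 (p 0 y / ∑ x', p x' y))
        + ∑ y, p 1 y * Real.logb 2 (p 1 y / ∑ x', p x' y))
      = ∑ y, -(p 0 y * Real.logb 2 (p 0 y / ∑ x', p x' y)
        + p 1 y * Real.logb 2 (p 1 y / ∑ x', p x' y)) := by
    rw [← Finset.sum_add_distrib, ← Finset.sum_neg_distrib]
  rw [rearr]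
  refine Finset.sum_le_sum fun y _ => ?_
  have e4 : (∑ x', p x' y) = q y := by rw [Fin.sum_univ_two]
  rw [e4]
  exact per_y_bound (hp 0 y) (hp 1 y)
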